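/- For every natural number n ≥ 2 and every function F : {0,1}^n → {0,1}^n, the probability that the random boolean cellular automaton ⟨D̃,b̃⟩ on n gates computes the map F equals the probability that the random boolean cellular automaton ⟨D̃′,b̃′⟩ on n gates computes the map F. -/

import Mathlib

open Filter Real

/-- A boolean cellular automaton on `n` gates: a directed graph on gates `1,…,n`
given by in-neighborhoods `inputs`, together with a boolean function per gate,
which depends only on the values of the gate's inputs. -/
structure BCA (n : ℕ) where
  inputs : Fin n → Finset (Fin n)
  fn : Fin n → (Fin n → Bool) → Bool
  fn_depends : ∀ i x y, (∀ j ∈ inputs i, x j = y j) → fn i x = fn i y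

namespace BCA

/-- One synchronous update step of the automaton. -/
def step {n : ℕ} (A : BCA n) (x : Fin n → Bool) : Fin n → Bool :=
  fun i => A.fn i x

/-- `Forced A i v t`: gate `i` is forced to value `v` in `t` steps. -/
inductive Forced {n : ℕ} (A : BCA n) : Fin n → Bool → ℕ → Prop
  | const (i : Fin n) (v : Bool) :
      (∀ x, A.fn i x = v) → Forced A i v 0
  | allInputs (i : Fin n) (u : Fin n → Bool) (t : ℕ) :
      (∀ j ∈ A.inputs i, Forced A j (u j) t) → Forced A i (A.fn i u) (t + 1)
  | canalyzing (i m : Fin n) (u v : Bool) (t : ℕ) :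
      m ∈ A.inputs i → (∀ x, x m = u → A.fn i x = v) →
      Forced A m u t → Forced A i v (t + 1)

/-- Gate `i` is forced (to some value) within `d` steps. -/
def ForcedWithin {n : ℕ} (A : BCA n) (i : Fin n) (d : ℕ) : Prop :=
  ∃ v, ∃ t ≤ d, Forced A i v t

/-- Gate `i` is forced (to some value) in `r` steps, `r` a real bound. -/
def ForcedWithinR {n : ℕ} (A : BCA n) (i : Fin n) (r : ℝ) : Prop :=
  ∃ v, ∃ t : ℕ, (t : ℝ) ≤ r ∧ Forced A i v t

/-- `Ninv A d i` is `N_d^-(i)`. -/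
def Ninv {n : ℕ} (A : BCA n) : ℕ → Fin n → Finset (Fin n)
  | 0, i => {i}
  | d + 1, i => (A.inputs i).biUnion (fun j => Ninv A d j)

/-- `Sd A d i` is `S_d^-(i) = ∪_{c ≤ d} N_c^-(i)`. -/
def Sd {n : ℕ} (A : BCA n) (d : ℕ) (i : Fin n) : Finset (Fin n) :=
  (Finset.range (d + 1)).biUnion (fun c => Ninv A c i)

/-- The subgraph induced on the gate set `s` is acyclic (no directed cycle). -/
def AcyclicOn {n : ℕ} (A : BCA n) (s : Finset (Fin n)) : Prop :=
  ¬ ∃ (k : ℕ) (g : ℕ → Fin n), 0 < k ∧ (∀ r ≤ k, g r ∈ s) ∧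
      (∀ r < k, g r ∈ A.inputs (g (r + 1))) ∧ g 0 = g k

end BCA
/-- A sample point for one gate in Kauffman-type model ⟨D̃,b̃⟩: an unordered pair of
distinct inputs (recorded in increasing order) and a 2-input boolean function,
whose first argument corresponds to the smaller input. -/
abbrev GateCfg (n : ℕ) := {p : Fin n × Fin n // p.1 < p.2} × (Bool → Bool → Bool)

/-- A sample point for the random automaton `⟨D̃,b̃⟩`: one gate configuration per gate. -/
abbrev Config (n : ℕ) := Fin n → GateCfg n

/-- `f` depends on its first argument. -/
def DependsOnFirst (f : Bool → Bool → Bool) : Prop := ∃ b, f true b ≠ f false b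

/-- `f` depends on its second argument. -/
def DependsOnSecond (f : Bool → Bool → Bool) : Prop := ∃ a, f a true ≠ f a false

open Classical in
/-- Probability of picking the boolean function `f` for a given gate, with bias `e`:
`(1-e)/16` for the 10 functions depending on both arguments, `(1+e)/16` for the 4
functions depending on exactly one argument, `(1+3e)/16` for the 2 constants. -/
noncomputable def fnWeight (e : ℝ) (f : Bool → Bool → Bool) : ℝ :=
  if DependsOnFirst f ∧ DependsOnSecond f then (1 - e) / 16
  else if DependsOnFirst f ∨ DependsOnSecond f then (1 + e) / 16
  else (1 + 3 * e) / 16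

/-- Probability of a complete configuration: independently for each gate, a uniform
unordered pair of distinct inputs and a boolean function with weight `fnWeight`. -/
noncomputable def configWeight (e : ℝ) {n : ℕ} (c : Config n) : ℝ :=
  ∏ i : Fin n, (1 / (n.choose 2 : ℝ)) * fnWeight e (c i).2

open Classical in
/-- Probability that the random boolean cellular automaton `⟨D̃,b̃⟩` on `n` gates
(with bias `e`) satisfies `P`. -/
noncomputable def Pr (e : ℝ) {n : ℕ} (P : Config n → Prop) : ℝ :=
  ∑ c : Config n, if P c then configWeight e c else 0

/-- The boolean cellular automaton determined by a configuration. -/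
def Config.toBCA {n : ℕ} (c : Config n) : BCA n where
  inputs i := {(c i).1.1.1, (c i).1.1.2}
  fn i x := (c i).2 (x (c i).1.1.1) (x (c i).1.1.2)
  fn_depends := by
    intro i x y h
    try simp only at h ⊢
    rw [h _ (Finset.mem_insert_self _ _),
      h _ (Finset.mem_insert_of_mem (Finset.mem_singleton_self _))]
/-- A sample point for one gate in the second model `⟨D̃′,b̃′⟩`: either two distinct
inputs with a 2-input boolean function, or a single input with a 1-input function. -/
abbrev GateCfg' (n : ℕ) := GateCfg n ⊕ (Fin n × (Bool → Bool))

/-- A sample point for the random automaton `⟨D̃′,b̃′⟩`. -/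
abbrev Config' (n : ℕ) := Fin n → GateCfg' n

/-- Inputs of a gate in the second model. -/
def GateCfg'.inputs {n : ℕ} : GateCfg' n → Finset (Fin n)
  | .inl g => {g.1.1.1, g.1.1.2}
  | .inr g => {g.1}

/-- Evaluation of a gate's boolean function in the second model. -/
def GateCfg'.eval {n : ℕ} : GateCfg' n → (Fin n → Bool) → Bool
  | .inl g, x => g.2 (x g.1.1.1) (x g.1.1.2)
  | .inr g, x => g.2 (x g.1)

/-- Per-gate probability in the second model: with probability `1-e` the gate gets two
distinct inputs uniform among `C(n,2)` pairs and one of the 16 functions uniformly; with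
probability `e` it gets a single input uniform among `n` and one of 4 functions uniformly. -/
noncomputable def gateWeight' (e : ℝ) (n : ℕ) : GateCfg' n → ℝ
  | .inl _ => (1 - e) / ((n.choose 2 : ℝ) * 16)
  | .inr _ => e / ((n : ℝ) * 4)

/-- Probability of a configuration in the second model (gates independent). -/
noncomputable def config'Weight (e : ℝ) {n : ℕ} (c : Config' n) : ℝ :=
  ∏ i : Fin n, gateWeight' e n (c i)

open Classical in
/-- Probability that the random boolean cellular automaton `⟨D̃′,b̃′⟩` on `n` gates
(with bias `e`) satisfies `P`. -/
noncomputable def Pr' (e : ℝ) {n : ℕ} (P : Config' n → Prop) : ℝ :=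
  ∑ c : Config' n, if P c then config'Weight e c else 0

/-- The boolean cellular automaton determined by a configuration of the second model. -/
def Config'.toBCA {n : ℕ} (c : Config' n) : BCA n where
  inputs i := (c i).inputs
  fn i x := (c i).eval x
  fn_depends := by
    intro i x y h
    try simp only at h ⊢
    cases hc : c i with
    | inl g =>
        rw [hc] at h
        simp only [GateCfg'.inputs] at h
        simp only [GateCfg'.eval]
        rw [h _ (Finset.mem_insert_self _ _),
          h _ (Finset.mem_insert_of_mem (Finset.mem_singleton_self _))]
    | inr g =>
        rw [hc] at h
        simp only [GateCfg'.inputs] at h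
        simp only [GateCfg'.eval]
        rw [h _ (Finset.mem_singleton_self _)]
section Aux

open Finset

instance : DecidablePred DependsOnFirst := fun f =>
  decidable_of_iff (∃ b, f true b ≠ f false b) Iff.rfl

instance : DecidablePred DependsOnSecond := fun f =>
  decidable_of_iff (∃ a, f a true ≠ f a false) Iff.rfl

def kn (f : Bool → Bool → Bool) : ℕ :=
  if DependsOnFirst f ∧ DependsOnSecond f then 0
  else if DependsOnFirst f ∨ DependsOnSecond f then 2 else 4

lemma fnWeight_eq (e : ℝ) (f : Bool → Bool → Bool) :
    fnWeight e f = (1 - e) / 16 + e * (kn f : ℝ) / 16 := by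
  unfold fnWeight kn
  split_ifs <;> push_cast <;> ring

lemma kn_count (f : Bool → Bool → Bool) :
    kn f = ∑ h : Bool → Bool,
      ((if (fun a (_ : Bool) => h a) = f then 2 else 0) +
       (if (fun (_ : Bool) b => h b) = f then 2 else 0)) := by
  revert f; decide

lemma kn_count_real (f : Bool → Bool → Bool) :
    (kn f : ℝ) = ∑ h : Bool → Bool,
      ((if (fun a (_ : Bool) => h a) = f then (2:ℝ) else 0) +
       (if (fun (_ : Bool) b => h b) = f then (2:ℝ) else 0)) := by
  rw [kn_count f]
  push_cast [apply_ite (Nat.cast : ℕ → ℝ)]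
  ring

end Aux
open Finset in
lemma sum_diag_filter {n : ℕ} (φ : Fin n → ℝ) :
    ∑ p ∈ univ.filter (fun p : Fin n × Fin n => p.1 = p.2), φ p.1 = ∑ j, φ j := by
  apply Finset.sum_nbij' (fun p => p.1) (fun j => (j, j)) <;> simp_all

open Finset in
lemma sum_pairs {n : ℕ} (φ : Fin n → ℝ) :
    ∑ p : {p : Fin n × Fin n // p.1 < p.2}, (φ p.1.1 + φ p.1.2)
      = ((n : ℝ) - 1) * ∑ j, φ j := by
  classical
  have h1 : ∑ p : {p : Fin n × Fin n // p.1 < p.2}, (φ p.1.1 + φ p.1.2)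
      = ∑ p ∈ univ.filter (fun p : Fin n × Fin n => p.1 < p.2), (φ p.1 + φ p.2) :=
    (Finset.sum_subtype _ (fun x => by simp) (fun p : Fin n × Fin n => φ p.1 + φ p.2)).symm
  have h2 : ∑ p ∈ univ.filter (fun p : Fin n × Fin n => p.1 < p.2), φ p.2
      = ∑ p ∈ univ.filter (fun p : Fin n × Fin n => p.2 < p.1), φ p.1 := by
    apply Finset.sum_nbij' (fun p => Prod.swap p) (fun p => Prod.swap p) <;> intros <;> (try rfl) <;> simp_all
  have h4 : ∑ p ∈ univ.filter (fun p : Fin n × Fin n => p.1 ≠ p.2), φ p.1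
      = ∑ p ∈ univ.filter (fun p : Fin n × Fin n => p.1 < p.2), φ p.1
        + ∑ p ∈ univ.filter (fun p : Fin n × Fin n => p.2 < p.1), φ p.1 := by
    rw [← Finset.sum_filter_add_sum_filter_not
        (univ.filter (fun p : Fin n × Fin n => p.1 ≠ p.2)) (fun p => p.1 < p.2),
      Finset.filter_filter, Finset.filter_filter]
    congr 1 <;> apply Finset.sum_congr ?_ (fun _ _ => rfl) <;>
      apply Finset.filter_congr <;> intro p _
    · exact ⟨fun h => h.2, fun h => ⟨ne_of_lt h, h⟩⟩
    · exact ⟨fun h => lt_of_le_of_ne (not_lt.mp h.2) (Ne.symm h.1),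
        fun h => ⟨(ne_of_lt h).symm, not_lt.mpr (le_of_lt h)⟩⟩
  have h5 : ∑ p ∈ univ.filter (fun p : Fin n × Fin n => p.1 ≠ p.2), φ p.1
      = (n : ℝ) * ∑ j, φ j - ∑ j, φ j := by
    have := Finset.sum_filter_add_sum_filter_not
      (univ : Finset (Fin n × Fin n)) (fun p => p.1 = p.2) (fun p => φ p.1)
    have htot : ∑ p : Fin n × Fin n, φ p.1 = (n : ℝ) * ∑ j, φ j := by
      rw [Fintype.sum_prod_type]
      simp [Finset.sum_const, Finset.mul_sum]
    rw [sum_diag_filter] at this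
    have : ∑ p ∈ univ.filter (fun p : Fin n × Fin n => ¬ p.1 = p.2), φ p.1
        = (n : ℝ) * ∑ j, φ j - ∑ j, φ j := by
      rw [← htot, ← this]; ring
    simpa using this
  rw [h1, Finset.sum_add_distrib, h2, ← h4, h5]
  ring

open Finset in
lemma gate_eq (e : ℝ) {n : ℕ} (hn : 2 ≤ n) (g : (Fin n → Bool) → Bool) :
    ∑ a : GateCfg n, (if (fun x => a.2 (x a.1.1.1) (x a.1.1.2)) = g
        then (1 / (n.choose 2 : ℝ)) * fnWeight e a.2 else 0)
    = ∑ a : GateCfg' n, (if GateCfg'.eval a = g then gateWeight' e n a else 0) := by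
  classical
  have hn2 : (2 : ℝ) ≤ (n : ℝ) := by exact_mod_cast hn
  have hn0 : (n : ℝ) ≠ 0 := by linarith
  have hn1 : (n : ℝ) - 1 ≠ 0 := by linarith
  have hC2 : 2 * (n.choose 2 : ℝ) = (n : ℝ) * ((n : ℝ) - 1) := by
    have h2 : 2 * n.choose 2 = n * (n - 1) := by
      rw [Nat.choose_two_right, Nat.mul_div_cancel']
      rcases Nat.even_or_odd n with h | h
      · exact (h.mul_right _).two_dvd
      · have : Even (n - 1) := Nat.Odd.sub_odd h odd_one
        exact (this.mul_left _).two_dvd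
    have h3 := congrArg (Nat.cast : ℕ → ℝ) h2
    push_cast [Nat.cast_sub (by omega : 1 ≤ n)] at h3
    linarith
  have hC0 : (n.choose 2 : ℝ) ≠ 0 := by
    intro h; apply mul_ne_zero hn0 hn1; rw [h] at hC2; linarith
  -- abbreviation for ψ
  have key3 : ∀ p : {p : Fin n × Fin n // p.1 < p.2},
      ∑ f : Bool → Bool → Bool,
        (if (fun x => f (x p.1.1) (x p.1.2)) = g then (kn f : ℝ) else 0)
      = 2 * ((∑ h : Bool → Bool, if (fun x => h (x p.1.1)) = g then (1:ℝ) else 0)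
          + (∑ h : Bool → Bool, if (fun x => h (x p.1.2)) = g then (1:ℝ) else 0)) := by
    intro p
    have e1 : ∀ f : Bool → Bool → Bool,
        (if (fun x => f (x p.1.1) (x p.1.2)) = g then (kn f : ℝ) else 0)
        = ∑ h : Bool → Bool,
            ((if (fun a (_ : Bool) => h a) = f then
                (if (fun x : Fin n → Bool => f (x p.1.1) (x p.1.2)) = g then (2:ℝ) else 0) else 0)
            + (if (fun (_ : Bool) b => h b) = f then
                (if (fun x : Fin n → Bool => f (x p.1.1) (x p.1.2)) = g then (2:ℝ) else 0) else 0)) := by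
      intro f
      by_cases hf : (fun x : Fin n → Bool => f (x p.1.1) (x p.1.2)) = g
      · rw [if_pos hf, kn_count_real]
        exact Finset.sum_congr rfl fun h _ => by rw [if_pos hf]
      · rw [if_neg hf]
        symm; apply Finset.sum_eq_zero; intro h _
        rw [if_neg hf]; simp
    rw [Finset.sum_congr rfl fun f _ => e1 f, Finset.sum_comm]
    have e2 : ∀ h : Bool → Bool,
        (∑ f : Bool → Bool → Bool,
          ((if (fun a (_ : Bool) => h a) = f then
              (if (fun x : Fin n → Bool => f (x p.1.1) (x p.1.2)) = g then (2:ℝ) else 0) else 0)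
          + (if (fun (_ : Bool) b => h b) = f then
              (if (fun x : Fin n → Bool => f (x p.1.1) (x p.1.2)) = g then (2:ℝ) else 0) else 0)))
        = (if (fun x : Fin n → Bool => h (x p.1.1)) = g then (2:ℝ) else 0)
          + (if (fun x : Fin n → Bool => h (x p.1.2)) = g then (2:ℝ) else 0) := by
      intro h
      rw [Finset.sum_add_distrib,
        Finset.sum_ite_eq univ (fun a (_ : Bool) => h a)
          (fun f => if (fun x : Fin n → Bool => f (x p.1.1) (x p.1.2)) = g then (2:ℝ) else 0),
        Finset.sum_ite_eq univ (fun (_ : Bool) b => h b)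
          (fun f => if (fun x : Fin n → Bool => f (x p.1.1) (x p.1.2)) = g then (2:ℝ) else 0)]
      simp only [Finset.mem_univ, if_true]
    rw [Finset.sum_congr rfl fun h _ => e2 h, Finset.sum_add_distrib, mul_add]
    congr 1 <;> · rw [Finset.mul_sum]
                  exact Finset.sum_congr rfl fun h _ => by split_ifs <;> ring
  -- split of LHS
  have step1 : ∑ a : GateCfg n, (if (fun x => a.2 (x a.1.1.1) (x a.1.1.2)) = g
        then (1 / (n.choose 2 : ℝ)) * fnWeight e a.2 else 0)
      = (∑ a : GateCfg n, (if (fun x => a.2 (x a.1.1.1) (x a.1.1.2)) = g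
          then (1 - e) / ((n.choose 2 : ℝ) * 16) else 0))
        + ∑ a : GateCfg n, (if (fun x => a.2 (x a.1.1.1) (x a.1.1.2)) = g
          then e / ((n.choose 2 : ℝ) * 16) * (kn a.2 : ℝ) else 0) := by
    rw [← Finset.sum_add_distrib]
    apply Finset.sum_congr rfl; intro a _
    split_ifs with h
    · rw [fnWeight_eq]; ring
    · ring
  -- the extra part of LHS
  have step2 : ∑ a : GateCfg n, (if (fun x => a.2 (x a.1.1.1) (x a.1.1.2)) = g
          then e / ((n.choose 2 : ℝ) * 16) * (kn a.2 : ℝ) else 0)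
      = e / ((n.choose 2 : ℝ) * 16) * (2 * (((n : ℝ) - 1) *
          ∑ j, ∑ h : Bool → Bool, (if (fun x : Fin n → Bool => h (x j)) = g then (1:ℝ) else 0))) := by
    calc ∑ a : GateCfg n, (if (fun x => a.2 (x a.1.1.1) (x a.1.1.2)) = g
          then e / ((n.choose 2 : ℝ) * 16) * (kn a.2 : ℝ) else 0)
        = ∑ p : {p : Fin n × Fin n // p.1 < p.2}, ∑ f : Bool → Bool → Bool,
            (if (fun x => f (x p.1.1) (x p.1.2)) = g
              then e / ((n.choose 2 : ℝ) * 16) * (kn f : ℝ) else 0) :=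
          Fintype.sum_prod_type (f := fun a : GateCfg n =>
            if (fun x => a.2 (x a.1.1.1) (x a.1.1.2)) = g
              then e / ((n.choose 2 : ℝ) * 16) * (kn a.2 : ℝ) else 0)
      _ = ∑ p : {p : Fin n × Fin n // p.1 < p.2}, e / ((n.choose 2 : ℝ) * 16) *
            ∑ f : Bool → Bool → Bool,
              (if (fun x => f (x p.1.1) (x p.1.2)) = g then (kn f : ℝ) else 0) := by
          apply Finset.sum_congr rfl; intro p _
          rw [Finset.mul_sum]
          exact Finset.sum_congr rfl fun f _ => by split_ifs <;> ring
      _ = ∑ p : {p : Fin n × Fin n // p.1 < p.2}, e / ((n.choose 2 : ℝ) * 16) *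
            (2 * ((∑ h : Bool → Bool, if (fun x => h (x p.1.1)) = g then (1:ℝ) else 0)
              + (∑ h : Bool → Bool, if (fun x => h (x p.1.2)) = g then (1:ℝ) else 0))) := by
          exact Finset.sum_congr rfl fun p _ => by rw [key3 p]
      _ = e / ((n.choose 2 : ℝ) * 16) * (2 *
            ∑ p : {p : Fin n × Fin n // p.1 < p.2},
              ((∑ h : Bool → Bool, if (fun x => h (x p.1.1)) = g then (1:ℝ) else 0)
              + (∑ h : Bool → Bool, if (fun x => h (x p.1.2)) = g then (1:ℝ) else 0))) := by
          rw [Finset.mul_sum, Finset.mul_sum]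
      _ = e / ((n.choose 2 : ℝ) * 16) * (2 * (((n : ℝ) - 1) *
            ∑ j, ∑ h : Bool → Bool, (if (fun x : Fin n → Bool => h (x j)) = g then (1:ℝ) else 0))) := by
          rw [sum_pairs (fun j => ∑ h : Bool → Bool,
            (if (fun x : Fin n → Bool => h (x j)) = g then (1:ℝ) else 0))]
  -- RHS
  have stepR : ∑ a : GateCfg' n, (if GateCfg'.eval a = g then gateWeight' e n a else 0)
      = (∑ a : GateCfg n, (if (fun x => a.2 (x a.1.1.1) (x a.1.1.2)) = g
          then (1 - e) / ((n.choose 2 : ℝ) * 16) else 0))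
        + e / ((n : ℝ) * 4) *
            ∑ j, ∑ h : Bool → Bool, (if (fun x : Fin n → Bool => h (x j)) = g then (1:ℝ) else 0) := by
    rw [Fintype.sum_sum_type]
    congr 1
    calc ∑ b : Fin n × (Bool → Bool),
          (if GateCfg'.eval (Sum.inr b) = g then gateWeight' e n (Sum.inr b) else 0)
        = ∑ j, ∑ h : Bool → Bool,
            (if (fun x : Fin n → Bool => h (x j)) = g then e / ((n : ℝ) * 4) else 0) :=
          Fintype.sum_prod_type (f := fun b : Fin n × (Bool → Bool) =>
            if GateCfg'.eval (Sum.inr b) = g then gateWeight' e n (Sum.inr b) else 0)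
      _ = e / ((n : ℝ) * 4) *
            ∑ j, ∑ h : Bool → Bool, (if (fun x : Fin n → Bool => h (x j)) = g then (1:ℝ) else 0) := by
          rw [Finset.mul_sum]
          apply Finset.sum_congr rfl; intro j _
          rw [Finset.mul_sum]
          exact Finset.sum_congr rfl fun h _ => by split_ifs <;> ring
  rw [step1, step2, stepR]
  congr 1
  set T := ∑ j, ∑ h : Bool → Bool,
    (if (fun x : Fin n → Bool => h (x j)) = g then (1:ℝ) else 0) with hT
  field_simp
  linear_combination (-8 * e * T) * hC2

lemma ite_all_prod {ι : Type*} [Fintype ι] (Q : ι → Prop) [DecidablePred Q]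
    [Decidable (∀ i, Q i)] (w : ι → ℝ) :
    (if (∀ i, Q i) then ∏ i, w i else 0) = ∏ i, (if Q i then w i else 0) := by
  by_cases h : ∀ i, Q i
  · rw [if_pos h]
    exact Finset.prod_congr rfl fun i _ => (if_pos (h i)).symm
  · rw [if_neg h]
    push_neg at h
    obtain ⟨i, hi⟩ := h
    symm
    apply Finset.prod_eq_zero (Finset.mem_univ i)
    exact if_neg hi



/-- for every `n ≥ 2` and every map `F : {0,1}ⁿ → {0,1}ⁿ`, the two random
models compute the map `F` with the same probability. -/
theorem stmt0 (ε : ℕ → ℝ) (hε : ∀ n, 0 ≤ ε n ∧ ε n ≤ 1)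
    (n : ℕ) (hn : 2 ≤ n) (F : (Fin n → Bool) → (Fin n → Bool)) :
    Pr (ε n) (fun c : Config n => (Config.toBCA c).step = F) =
      Pr' (ε n) (fun c : Config' n => (Config'.toBCA c).step = F) := by
  classical
  set e := ε n with he
  have hL : ∀ c : Config n, ((Config.toBCA c).step = F ↔
      ∀ i, (fun x => (c i).2 (x (c i).1.1.1) (x (c i).1.1.2)) = (fun x => F x i)) := by
    intro c
    constructor
    · intro h i; funext x; exact congrFun (congrFun h x) i
    · intro h; funext x i; exact congrFun (h i) x
  have hR : ∀ c : Config' n, ((Config'.toBCA c).step = F ↔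
      ∀ i, GateCfg'.eval (c i) = (fun x => F x i)) := by
    intro c
    constructor
    · intro h i; funext x; exact congrFun (congrFun h x) i
    · intro h; funext x i; exact congrFun (h i) x
  have lhs_eq : Pr e (fun c : Config n => (Config.toBCA c).step = F)
      = ∏ i, ∑ a : GateCfg n, (if (fun x => a.2 (x a.1.1.1) (x a.1.1.2)) = (fun x => F x i)
          then (1 / (n.choose 2 : ℝ)) * fnWeight e a.2 else 0) := by
    rw [Pr, Finset.prod_univ_sum, Fintype.piFinset_univ]
    apply Finset.sum_congr rfl; intro c _
    beta_reduce
    by_cases hc : (Config.toBCA c).step = F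
    · rw [if_pos hc, configWeight]
      have hQ := (hL c).mp hc
      apply Finset.prod_congr rfl
      intro i _
      rw [if_pos (hQ i)]
    · rw [if_neg hc]
      have hQ : ¬ ∀ i, (fun x => (c i).2 (x (c i).1.1.1) (x (c i).1.1.2)) = (fun x => F x i) :=
        fun h => hc ((hL c).mpr h)
      push_neg at hQ
      obtain ⟨i, hi⟩ := hQ
      symm
      apply Finset.prod_eq_zero (Finset.mem_univ i)
      exact if_neg hi
  have rhs_eq : Pr' e (fun c : Config' n => (Config'.toBCA c).step = F)
      = ∏ i, ∑ a : GateCfg' n, (if GateCfg'.eval a = (fun x => F x i)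
          then gateWeight' e n a else 0) := by
    rw [Pr', Finset.prod_univ_sum, Fintype.piFinset_univ]
    apply Finset.sum_congr rfl; intro c _
    beta_reduce
    by_cases hc : (Config'.toBCA c).step = F
    · rw [if_pos hc, config'Weight]
      have hQ := (hR c).mp hc
      apply Finset.prod_congr rfl
      intro i _
      rw [if_pos (hQ i)]
    · rw [if_neg hc]
      have hQ : ¬ ∀ i, GateCfg'.eval (c i) = (fun x => F x i) :=
        fun h => hc ((hR c).mpr h)
      push_neg at hQ
      obtain ⟨i, hi⟩ := hQ
      symm
      apply Finset.prod_eq_zero (Finset.mem_univ i)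
      exact if_neg hi
  rw [lhs_eq, rhs_eq]
  exact Finset.prod_congr rfl fun i _ => gate_eq e hn (fun x => F x i)
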